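/- For any natural number a and any finite multiset M of natural numbers, the map λ ∘ mir ∘ τ is an involution on the set L_{a,M}: it maps L_{a,M} to itself and applying it twice gives the identity. Moreover, this involution exchanges the statistics area and depth, i.e., for P ∈ L_{a,M} and P' = λ(mir(τ(P))), one has area(P') = depth(P) and depth(P') = area(P). -/

import Mathlib

/-! ## Plane trees -/

/-- A plane tree: a root together with an ordered (left-to-right) list of subtrees.
A node is a *leaf* if it has no children, and *internal* otherwise. -/
inductive PTree : Type where
  | node : List PTree → PTree


namespace Luka

/-! ## Łukasiewicz paths

A path is encoded by its list of step increments: the step `(1,k)` (an up-step `U_k` of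
degree `k`) is encoded by `k : ℤ` with `k ≥ 0`, and the down step `D = (1,-1)` by `-1`. -/

/-- `P` is a Łukasiewicz path: it is nonempty, uses steps `(1,k)` with `k ≥ -1`,
stays (weakly) above the `x`-axis before its last step, and ends at height `-1`
(so that it goes strictly below the axis only at the last step, which is forced
to be the down-step `D`). -/
def IsLukas (P : List ℤ) : Prop :=
  P ≠ [] ∧ (∀ s ∈ P, -1 ≤ s) ∧ (∀ n, n < P.length → 0 ≤ (P.take n).sum) ∧ P.sum = -1

/-- The degrees of the up-steps of `P`, from left to right (the *profile* of `P`). -/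
def upDegs (P : List ℤ) : List ℕ := (P.filter (fun s => 0 ≤ s)).map Int.toNat

/-- The profile multiset `𝔐(P)`: the multiset of degrees of the up-steps of `P`. -/
def profileM (P : List ℤ) : Multiset ℕ := (upDegs P : Multiset ℕ)

/-- The degree of the first up-step of `P`, if any. -/
def firstUp? (P : List ℤ) : Option ℕ := (upDegs P).head?

/-- The degree of the last up-step of `P`, if any. -/
def lastUp? (P : List ℤ) : Option ℕ := (upDegs P).getLast?

/-- Auxiliary: starting from height `h`, record the starting height of every up-step. -/
def areaVecAux : ℤ → List ℤ → List ℤ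
  | _, [] => []
  | h, s :: rest => (if 0 ≤ s then [h] else []) ++ areaVecAux (h + s) rest

/-- The area vector `Area(P)`: the `i`-th entry is the `y`-coordinate of the starting
point of the `i`-th up-step of `P`. -/
def areaVec (P : List ℤ) : List ℤ := areaVecAux 0 P

/-- `area(P)`: the sum of the entries of the area vector (entries of a Łukasiewicz
path are nonnegative, so taking `Int.toNat` entrywise is harmless). -/
def area (P : List ℤ) : ℕ := ((areaVec P).map Int.toNat).sum

/-- Auxiliary computation of the depth values: `cur` is the depth value of the previous
step (`0` initially), and `stack` holds the pending depth values of the future matching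
down-steps (top of the stack = value for the next matching down-step to come).
Reading an up-step `U_k` whose value is `cur` (inherited from the previous step) pushes
the values `cur+1, …, cur+k` for its `k` matching down-steps (its first matching
down-step, which crosses its topmost interior level, gets `cur+1`, etc.); reading a
down-step pops its value.  The list returned records the value `d_i` of each up-step,
from left to right. -/
def depthVecAux : ℕ → List ℕ → List ℤ → List ℕ
  | _, _, [] => []
  | cur, stack, s :: rest =>
    if 0 ≤ s then
      cur :: depthVecAux cur ((List.range s.toNat).map (fun i => cur + i + 1) ++ stack) rest
    else
      match stack with
      | [] => depthVecAux cur [] rest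
      | v :: st => depthVecAux v st rest

/-- The depth vector `Depth(P)`: the values `d_i` at the up-steps of `P`, left to right. -/
def depthVec (P : List ℤ) : List ℕ := depthVecAux 0 [] P

/-- `depth(P)`: the sum of the entries of the depth vector. -/
def depth (P : List ℤ) : ℕ := (depthVec P).sum

/-- `P ∈ 𝓛_M`. -/
def MemL (M : Multiset ℕ) (P : List ℤ) : Prop := IsLukas P ∧ profileM P = M

/-- `P ∈ 𝓛_{a,M}`: first up-step of degree `a`, profile multiset `M ⊎ {a}`. -/
def MemLa (a : ℕ) (M : Multiset ℕ) (P : List ℤ) : Prop :=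
  IsLukas P ∧ firstUp? P = some a ∧ profileM P = a ::ₘ M

/-- `P ∈ 𝓛_{M,b}`: last up-step of degree `b`, profile multiset `M ⊎ {b}`. -/
def MemLb (M : Multiset ℕ) (b : ℕ) (P : List ℤ) : Prop :=
  IsLukas P ∧ lastUp? P = some b ∧ profileM P = b ::ₘ M

/-- `P ∈ 𝓛_{a,M,b}`: first up-step of degree `a`, last up-step of degree `b`,
profile multiset `M ⊎ {a, b}`. -/
def MemLab (a : ℕ) (M : Multiset ℕ) (b : ℕ) (P : List ℤ) : Prop :=
  IsLukas P ∧ firstUp? P = some a ∧ lastUp? P = some b ∧ profileM P = a ::ₘ b ::ₘ M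

/-! ## Plane-tree statistics -/

/-- The (ordered) children of the root of a plane tree. -/
def children : PTree → List PTree
  | .node ts => ts

/-- The degree of (the root of) a plane tree: its number of children. -/
def numChildren (t : PTree) : ℕ := (children t).length

mutual
/-- Number of internal nodes of a plane tree. -/
def internCount : PTree → ℕ
  | .node [] => 0
  | .node (t :: ts) => 1 + internCountL (t :: ts)
def internCountL : List PTree → ℕ
  | [] => 0
  | t :: ts => internCount t + internCountL ts
end

mutual
/-- `lthornT T` = the sum of `lthorn(u)` over all internal nodes `u` of `T`, where
`lthorn(u)` is the number of descending edges of strict ancestors `v` of `u` lying to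
the left of the path from `v` to `u`.  (Every internal node of the subtree rooted at
the `i`-th child (0-indexed) of a node gains `i` left thorns from that node.) -/
def lthornT : PTree → ℕ
  | .node ts => lthornL 0 ts
def lthornL : ℕ → List PTree → ℕ
  | _, [] => 0
  | i, t :: ts => lthornT t + i * internCount t + lthornL (i + 1) ts
end

mutual
/-- `rthornT T` = the sum of `rthorn(u)` over all internal nodes `u` of `T`, where
`rthorn(u)` is the number of descending edges of strict ancestors `v` of `u` lying to
the right of the path from `v` to `u`. -/
def rthornT : PTree → ℕ
  | .node ts => rthornL ts
def rthornL : List PTree → ℕ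
  | [] => 0
  | t :: ts => rthornT t + ts.length * internCount t + rthornL ts
end

mutual
/-- The list of the values `lthorn(u)` for the internal nodes `u` of `T`, in
contour-walk (preorder) order. -/
def lthornList : PTree → List ℕ
  | .node [] => []
  | .node (t :: ts) => 0 :: lthornLL 0 (t :: ts)
def lthornLL : ℕ → List PTree → List ℕ
  | _, [] => []
  | i, t :: ts => (lthornList t).map (· + i) ++ lthornLL (i + 1) ts
end

mutual
/-- The list of the values `rthorn(u)` for the internal nodes `u` of `T`, in
contour-walk (preorder) order. -/
def rthornList : PTree → List ℕ
  | .node [] => []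
  | .node (t :: ts) => 0 :: rthornLL (t :: ts)
def rthornLL : List PTree → List ℕ
  | [] => []
  | t :: ts => (rthornList t).map (· + ts.length) ++ rthornLL ts
end

/-! ## The bijections `λ` and `τ` -/

mutual
/-- `λ`: record each node of the tree at its first visit in the left-to-right contour
walk: `U_k` (i.e. `k`) for an internal node with `k+1` children, `D` (i.e. `-1`)
for a leaf. -/
def lambdaT : PTree → List ℤ
  | .node ts => ((ts.length : ℤ) - 1) :: lambdaL ts
def lambdaL : List PTree → List ℤ
  | [] => []
  | t :: ts => lambdaT t ++ lambdaL ts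
end

/-- Auxiliary for `τ`: reading the path from right to left, maintain the stack of the
already-built subtrees (in left-to-right order); a down-step `D` creates a leaf and an
up-step `U_k` grabs the `k+1` topmost subtrees as its children.  This builds the same
tree as the left-to-right "leftmost bud" construction. -/
def tauStack (P : List ℤ) : List PTree :=
  P.foldr (fun s st =>
    if s < 0 then PTree.node [] :: st
    else PTree.node (st.take (s.toNat + 1)) :: st.drop (s.toNat + 1)) []

/-- `τ`: the plane tree associated with a Łukasiewicz path. -/
def tau (P : List ℤ) : PTree := (tauStack P).headD (.node [])

mutual
/-- The mirror of a plane tree: reverse the left-to-right order of the children of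
every internal node. -/
def mir : PTree → PTree
  | .node ts => .node (mirL ts).reverse
def mirL : List PTree → List PTree
  | [] => []
  | t :: ts => mir t :: mirL ts
end

mutual
/-- The subtrees rooted at the internal nodes of `T`, in contour-walk (preorder)
order. -/
def internalSubtrees : PTree → List PTree
  | .node [] => []
  | .node (t :: ts) => .node (t :: ts) :: internalSubtreesL (t :: ts)
def internalSubtreesL : List PTree → List PTree
  | [] => []
  | t :: ts => internalSubtrees t ++ internalSubtreesL ts
end

/-- The multiset of degrees of the non-root internal nodes of `T`. -/
def nonRootInternalDegs (T : PTree) : Multiset ℕ :=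
  (((internalSubtreesL (children T)).map numChildren : List ℕ) : Multiset ℕ)

/-! ## Lodestars and the lodestar swap -/

/-- A node is a lodestar-type node if it is internal and all its children are leaves. -/
def isLodestarNode (t : PTree) : Bool :=
  !(children t).isEmpty && (children t).all (fun c => (children c).isEmpty)

mutual
/-- The subtree rooted at the *left lodestar* of `T`: the first internal node, in
contour-walk (preorder) order, all of whose children are leaves (if it exists). -/
def leftLode? : PTree → Option PTree
  | .node ts =>
    if isLodestarNode (.node ts) then some (.node ts) else leftLodeL? ts
def leftLodeL? : List PTree → Option PTree
  | [] => none
  | t :: ts =>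
    match leftLode? t with
    | some r => some r
    | none => leftLodeL? ts
end

mutual
/-- The subtree rooted at the *right lodestar* of `T`: the last internal node, in
contour-walk (preorder) order, all of whose children are leaves (if it exists). -/
def rightLode? : PTree → Option PTree
  | .node ts =>
    match rightLodeL? ts with
    | some r => some r
    | none => if isLodestarNode (.node ts) then some (.node ts) else none
def rightLodeL? : List PTree → Option PTree
  | [] => none
  | t :: ts =>
    match rightLodeL? ts with
    | some r => some r
    | none => rightLode? t
end

mutual
/-- Replace the left lodestar of `T` (first preorder all-leaf-children internal node)
by the tree `r`; `none` if `T` has no internal node. -/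
def replF : PTree → PTree → Option PTree
  | r, .node ts =>
    if isLodestarNode (.node ts) then some r
    else (replFL r ts).map PTree.node
def replFL : PTree → List PTree → Option (List PTree)
  | _, [] => none
  | r, t :: ts =>
    match replF r t with
    | some t' => some (t' :: ts)
    | none => (replFL r ts).map (t :: ·)
end

mutual
/-- Replace the right lodestar of `T` (last preorder all-leaf-children internal node)
by the tree `r`; `none` if `T` has no internal node. -/
def replL : PTree → PTree → Option PTree
  | r, .node ts =>
    match replLL r ts with
    | some ts' => some (.node ts')
    | none => if isLodestarNode (.node ts) then some r else none
def replLL : PTree → List PTree → Option (List PTree)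
  | _, [] => none
  | r, t :: ts =>
    match replLL r ts with
    | some ts' => some (t :: ts')
    | none => (replL r t).map (· :: ts)
end

/-- The lodestar swap: exchange the subtrees rooted at the left lodestar and the
right lodestar of `T` (each a node together with its pendant leaves). -/
def lodeSwap (T : PTree) : PTree :=
  match leftLode? T, rightLode? T with
  | some L, some R => ((replF R T).bind (replL L)).getD T
  | _, _ => T

/-! ## Auxiliary lemmas for the involution theorem -/

theorem lambdaL_append (ts us : List PTree) :
    lambdaL (ts ++ us) = lambdaL ts ++ lambdaL us := by
  induction ts with
  | nil => simp [lambdaL]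
  | cons t ts ih => simp [lambdaL, ih]

mutual
theorem lambdaT_sum : ∀ T : PTree, (lambdaT T).sum = -1
  | .node ts => by
      have := lambdaL_sum ts
      simp [lambdaT, this]; ring
theorem lambdaL_sum : ∀ ts : List PTree, (lambdaL ts).sum = -(ts.length : ℤ)
  | [] => by simp [lambdaL]
  | t :: ts => by
      have h1 := lambdaT_sum t
      have h2 := lambdaL_sum ts
      simp [lambdaL, h1, h2]
end

mutual
theorem lambdaT_steps : ∀ T : PTree, ∀ s ∈ lambdaT T, -1 ≤ s
  | .node ts => by
      intro s hs
      rw [lambdaT] at hs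
      rcases List.mem_cons.1 hs with h | h
      · subst h; have : (0:ℤ) ≤ ts.length := by positivity
        omega
      · exact lambdaL_steps ts s h
theorem lambdaL_steps : ∀ ts : List PTree, ∀ s ∈ lambdaL ts, -1 ≤ s
  | [] => by simp [lambdaL]
  | t :: ts => by
      intro s hs
      rw [lambdaL, List.mem_append] at hs
      rcases hs with h | h
      · exact lambdaT_steps t s h
      · exact lambdaL_steps ts s h
end

mutual
theorem lambdaT_take : ∀ (T : PTree) (n : ℕ), n < (lambdaT T).length →
    0 ≤ ((lambdaT T).take n).sum
  | .node ts, n => by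
      intro hn
      match n with
      | 0 => simp
      | (m+1) =>
        rw [lambdaT] at hn ⊢
        simp only [List.take_succ_cons, List.sum_cons, List.length_cons] at hn ⊢
        have := (lambdaL_take ts m).2 (by omega)
        omega
theorem lambdaL_take : ∀ (ts : List PTree) (n : ℕ),
    (-(ts.length : ℤ) ≤ ((lambdaL ts).take n).sum) ∧
    (n < (lambdaL ts).length → 1 - (ts.length : ℤ) ≤ ((lambdaL ts).take n).sum)
  | [], n => by simp [lambdaL]
  | t :: ts, n => by
      have hlc : ((t :: ts).length : ℤ) = (ts.length : ℤ) + 1 := by simp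
      rw [lambdaL]
      rw [List.take_append, List.sum_append]
      by_cases hn : n < (lambdaT t).length
      · have h1 := lambdaT_take t n hn
        have h2 : n - (lambdaT t).length = 0 := by omega
        rw [h2]
        simp only [List.take_zero, List.sum_nil, List.length_cons]
        constructor
        · push_cast; omega
        · intro _; push_cast; omega
      · have h1 : (lambdaT t).take n = lambdaT t := by
          apply List.take_of_length_le; omega
        rw [h1, lambdaT_sum t]
        have h2 := (lambdaL_take ts (n - (lambdaT t).length)).1
        have h3 := (lambdaL_take ts (n - (lambdaT t).length)).2
        constructor
        · push_cast; omega
        · intro hlt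
          rw [List.length_append] at hlt
          have h4 := h3 (by omega)
          push_cast
          push_cast at h4
          omega
end

theorem isLukas_lambdaT (T : PTree) : IsLukas (lambdaT T) := by
  refine ⟨?_, lambdaT_steps T, fun n hn => lambdaT_take T n hn, lambdaT_sum T⟩
  cases T with
  | node ts => rw [lambdaT]; simp

theorem tauStack_cons (s : ℤ) (P : List ℤ) :
    tauStack (s :: P) = (if s < 0 then PTree.node [] :: tauStack P
      else PTree.node ((tauStack P).take (s.toNat + 1)) :: (tauStack P).drop (s.toNat + 1)) := by
  simp [tauStack]

mutual
theorem tauStack_lambdaT : ∀ (T : PTree) (rest : List ℤ),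
    tauStack (lambdaT T ++ rest) = T :: tauStack rest
  | .node [], rest => by
      rw [lambdaT]
      simp only [lambdaL, List.length_nil, Nat.cast_zero, zero_sub, List.cons_append,
        List.nil_append]
      rw [tauStack_cons]
      norm_num
  | .node (t :: ts), rest => by
      rw [lambdaT]
      simp only [List.cons_append]
      rw [tauStack_cons, tauStack_lambdaL (t :: ts) rest]
      have hpos : ¬ ((t :: ts).length : ℤ) - 1 < 0 := by
        simp only [List.length_cons]; push_cast; omega
      rw [if_neg hpos]
      have htn : (((t :: ts).length : ℤ) - 1).toNat + 1 = (t :: ts).length := by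
        simp only [List.length_cons]; omega
      rw [htn, List.take_left, List.drop_left]
theorem tauStack_lambdaL : ∀ (ts : List PTree) (rest : List ℤ),
    tauStack (lambdaL ts ++ rest) = ts ++ tauStack rest
  | [], rest => by simp [lambdaL]
  | t :: ts, rest => by
      rw [lambdaL, List.append_assoc, tauStack_lambdaT t, tauStack_lambdaL ts rest]
      rfl
end

theorem tau_lambdaT (T : PTree) : tau (lambdaT T) = T := by
  have h : tauStack (lambdaT T) = [T] := by
    have := tauStack_lambdaT T []
    simpa [tauStack] using this
  simp [tau, h]

theorem tauStack_spec : ∀ (P : List ℤ),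
    (∀ s ∈ P, -1 ≤ s) → (∀ Q : List ℤ, Q ≠ [] → Q.IsSuffix P → Q.sum ≤ -1) →
    lambdaL (tauStack P) = P ∧ ((tauStack P).length : ℤ) = -P.sum
  | [] => by intro _ _; simp [tauStack, lambdaL]
  | s :: P => by
      intro hstep hsuf
      obtain ⟨h1, h2⟩ := tauStack_spec P (fun x hx => hstep x (List.mem_cons_of_mem s hx))
        (fun Q hQ hsfx => hsuf Q hQ (hsfx.trans (List.suffix_cons s P)))
      have hsum : (s :: P).sum ≤ -1 := hsuf (s :: P) (by simp) List.suffix_rfl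
      rw [List.sum_cons] at hsum
      by_cases hs : s < 0
      · have hseq : s = -1 := by have := hstep s List.mem_cons_self; omega
        rw [tauStack_cons, if_pos hs]
        constructor
        · rw [lambdaL, lambdaT, h1, hseq]; simp [lambdaL]
        · simp only [List.length_cons, List.sum_cons]
          push_cast
          omega
      · rw [tauStack_cons, if_neg hs]
        have hs0 : 0 ≤ s := by omega
        have hlen : s.toNat + 1 ≤ (tauStack P).length := by omega
        have htake : ((tauStack P).take (s.toNat + 1)).length = s.toNat + 1 := by
          rw [List.length_take]; omega
        constructor
        · rw [lambdaL, lambdaT, htake]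
          rw [List.cons_append, ← lambdaL_append, List.take_append_drop, h1]
          congr 1
          push_cast
          omega
        · simp only [List.length_cons, List.length_drop, List.sum_cons]
          push_cast
          omega

theorem lambdaT_tau {P : List ℤ} (h : IsLukas P) : lambdaT (tau P) = P := by
  obtain ⟨hne, hstep, htake, hsum⟩ := h
  have hsuf : ∀ Q : List ℤ, Q ≠ [] → Q.IsSuffix P → Q.sum ≤ -1 := by
    intro Q hQ hsfx
    obtain ⟨pre, hpre⟩ := hsfx
    have hlen : pre.length < P.length := by
      rw [← hpre, List.length_append]
      cases Q with
      | nil => exact absurd rfl hQ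
      | cons a l => simp
    have h0 : 0 ≤ (P.take pre.length).sum := htake pre.length hlen
    have hP : P.take pre.length = pre := by
      rw [← hpre, List.take_left]
    rw [hP] at h0
    have : pre.sum + Q.sum = P.sum := by rw [← hpre, List.sum_append]
    omega
  obtain ⟨h1, h2⟩ := tauStack_spec P hstep hsuf
  rw [hsum] at h2
  have hlen1 : (tauStack P).length = 1 := by omega
  obtain ⟨T, hT⟩ := List.length_eq_one_iff.mp hlen1
  rw [hT] at h1
  rw [lambdaL, lambdaL] at h1
  simp only [List.append_nil] at h1
  rw [tau, hT]
  simpa using h1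

theorem mirL_eq_map (ts : List PTree) : mirL ts = ts.map mir := by
  induction ts with
  | nil => simp [mirL]
  | cons t ts ih => simp [mirL, ih]

mutual
theorem mir_mir : ∀ T : PTree, mir (mir T) = T
  | .node ts => by
      rw [mir, mir, mirL_eq_map, mirL_eq_map, List.map_reverse, List.reverse_reverse,
        List.map_map]
      rw [show (mir ∘ mir) = fun t => mir (mir t) from rfl]
      rw [mir_mirL ts]
theorem mir_mirL : ∀ ts : List PTree, ts.map (fun t => mir (mir t)) = ts
  | [] => by simp
  | t :: ts => by
      simp only [List.map_cons, mir_mir t, mir_mirL ts]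
end

theorem upDegs_append (l1 l2 : List ℤ) : upDegs (l1 ++ l2) = upDegs l1 ++ upDegs l2 := by
  simp [upDegs]

theorem mir_node (ts : List PTree) : mir (.node ts) = .node (mirL ts).reverse := rfl

theorem mirL_reverse_cons (t : PTree) (ts : List PTree) :
    (mirL (t :: ts)).reverse = (mirL ts).reverse ++ [mir t] := by
  rw [mirL]; simp

theorem upDegs_cons_nonneg {s : ℤ} (hs : 0 ≤ s) (l : List ℤ) :
    upDegs (s :: l) = s.toNat :: upDegs l := by
  simp [upDegs, List.filter_cons, hs]

theorem lambdaL_single (t : PTree) : lambdaL [t] = lambdaT t := by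
  rw [lambdaL, lambdaL, List.append_nil]

mutual
theorem prof_mirT : ∀ T : PTree,
    (upDegs (lambdaT (mir T))).Perm (upDegs (lambdaT T))
  | .node [] => by rw [mir_node]; simp [mirL]
  | .node (t :: ts) => by
      rw [mir_node, lambdaT, lambdaT, mirL_reverse_cons]
      have hlen : ((mirL ts).reverse ++ [mir t]).length = (t :: ts).length := by
        simp [mirL_eq_map]
      rw [hlen]
      have hd : (0:ℤ) ≤ ((t :: ts).length : ℤ) - 1 := by simp
      rw [upDegs_cons_nonneg hd, upDegs_cons_nonneg hd, ← mirL_reverse_cons]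
      exact (prof_mirL (t :: ts)).cons _
theorem prof_mirL : ∀ ts : List PTree,
    (upDegs (lambdaL ((mirL ts).reverse))).Perm (upDegs (lambdaL ts))
  | [] => by simp [mirL]
  | t :: ts => by
      rw [mirL_reverse_cons]
      have h1 : lambdaL ((mirL ts).reverse ++ [mir t])
          = lambdaL ((mirL ts).reverse) ++ lambdaT (mir t) := by
        rw [lambdaL_append, lambdaL_single]
      rw [h1, lambdaL, upDegs_append, upDegs_append]
      exact ((prof_mirL ts).append (prof_mirT t)).trans List.perm_append_comm
end

theorem areaVecAux_append (xs : List ℤ) : ∀ (h : ℤ) (ys : List ℤ),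
    areaVecAux h (xs ++ ys) = areaVecAux h xs ++ areaVecAux (h + xs.sum) ys := by
  induction xs with
  | nil => intro h ys; simp [areaVecAux]
  | cons s xs ih =>
      intro h ys
      rw [List.cons_append, areaVecAux, areaVecAux, ih (h + s) ys, List.sum_cons]
      rw [List.append_assoc, add_assoc]

theorem rthornList_node (ts : List PTree) :
    rthornList (.node ts) = if ts.isEmpty then [] else 0 :: rthornLL ts := by
  cases ts <;> simp [rthornList]

theorem lthornList_node (ts : List PTree) :
    lthornList (.node ts) = if ts.isEmpty then [] else 0 :: lthornLL 0 ts := by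
  cases ts <;> simp [lthornList]

mutual
theorem areaT : ∀ (T : PTree) (h : ℤ),
    areaVecAux h (lambdaT T) = (rthornList T).map (fun n : ℕ => (n : ℤ) + h)
  | .node [], h => by
      rw [lambdaT, rthornList]
      simp [lambdaL, areaVecAux]
  | .node (t :: ts), h => by
      rw [lambdaT, areaVecAux]
      have hd : (0:ℤ) ≤ ((t :: ts).length : ℤ) - 1 := by simp
      rw [if_pos hd, areaL (t :: ts) (h + (((t :: ts).length : ℤ) - 1)), rthornList,
        List.map_cons, List.singleton_append]
      congr 1
      · push_cast; ring
      · apply List.map_congr_left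
        intro n _
        push_cast
        ring
theorem areaL : ∀ (ts : List PTree) (h : ℤ),
    areaVecAux h (lambdaL ts) = (rthornLL ts).map (fun n : ℕ => (n : ℤ) + h + 1 - ts.length)
  | [], h => by simp [lambdaL, areaVecAux, rthornLL]
  | t :: ts, h => by
      rw [lambdaL, areaVecAux_append, lambdaT_sum t, areaT t h, areaL ts (h + -1), rthornLL,
        List.map_append, List.map_map]
      congr 1
      · apply List.map_congr_left
        intro n _
        simp only [Function.comp_apply, List.length_cons]
        push_cast
        ring
      · apply List.map_congr_left
        intro n _
        simp only [List.length_cons]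
        push_cast
        ring
end

theorem area_lambdaT (T : PTree) : area (lambdaT T) = (rthornList T).sum := by
  rw [area, areaVec, areaT T 0, List.map_map]
  have : (Int.toNat ∘ fun n : ℕ => (n : ℤ) + 0) = id := by
    funext n; simp
  rw [this, List.map_id]

theorem lthornLL_shift (ts : List PTree) : ∀ (i c : ℕ),
    (lthornLL i ts).map (· + c) = lthornLL (i + c) ts := by
  induction ts with
  | nil => intro i c; simp [lthornLL]
  | cons t ts ih =>
      intro i c
      rw [lthornLL, lthornLL, List.map_append, List.map_map]
      congr 1
      · apply List.map_congr_left
        intro n _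
        simp only [Function.comp_apply]
        omega
      · rw [ih (i + 1) c]
        congr 1
        omega

theorem range_map_succ_push (c n : ℕ) :
    (List.range (n + 1)).map (fun i => c + i + 1)
      = (c + 1) :: (List.range n).map (fun i => (c + 1) + i + 1) := by
  rw [List.range_succ_eq_map, List.map_cons, List.map_map]
  congr 1
  apply List.map_congr_left
  intro i _
  simp only [Function.comp_apply, Nat.succ_eq_add_one]
  omega

theorem depthVecAux_up (cur : ℕ) (stack : List ℕ) (s : ℤ) (hs : 0 ≤ s) (rest : List ℤ) :
    depthVecAux cur stack (s :: rest)
      = cur :: depthVecAux cur ((List.range s.toNat).map (fun i => cur + i + 1) ++ stack) rest := by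
  simp [depthVecAux, hs]

theorem depthVecAux_down (cur v : ℕ) (st : List ℕ) (rest : List ℤ) :
    depthVecAux cur (v :: st) (-1 :: rest) = depthVecAux v st rest := by
  simp [depthVecAux]

mutual
theorem depthT : ∀ (T : PTree) (c v : ℕ) (st : List ℕ) (rest : List ℤ),
    depthVecAux c (v :: st) (lambdaT T ++ rest)
      = (lthornList T).map (· + c) ++ depthVecAux v st rest
  | .node [], c, v, st, rest => by
      rw [lambdaT, lthornList]
      simp only [lambdaL, List.length_nil, Nat.cast_zero, zero_sub, List.nil_append,
        List.cons_append, List.map_nil]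
      rw [depthVecAux_down]
  | .node (t :: ts), c, v, st, rest => by
      rw [lambdaT, List.cons_append]
      have hs : (0:ℤ) ≤ ((t :: ts).length : ℤ) - 1 := by simp
      rw [depthVecAux_up c _ _ hs]
      have htn : (((t :: ts).length : ℤ) - 1).toNat = ts.length := by
        simp only [List.length_cons]; omega
      rw [htn, depthL t ts c v st rest, lthornList, List.map_cons, List.cons_append]
      congr 2
      · omega
      · rw [lthornLL_shift]; congr 1; omega
termination_by T c v st rest => sizeOf T
theorem depthL : ∀ (t : PTree) (ts : List PTree) (c v : ℕ) (st : List ℕ) (rest : List ℤ),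
    depthVecAux c ((List.range ts.length).map (fun i => c + i + 1) ++ (v :: st))
        (lambdaL (t :: ts) ++ rest)
      = lthornLL c (t :: ts) ++ depthVecAux v st rest
  | t, [], c, v, st, rest => by
      rw [lambdaL]
      simp only [List.length_nil, List.range_zero, List.map_nil, List.nil_append, lambdaL,
        List.append_nil]
      rw [depthT t c v st rest, lthornLL, lthornLL]
      simp
  | t, t' :: ts', c, v, st, rest => by
      rw [lambdaL, List.length_cons, range_map_succ_push, List.cons_append, List.append_assoc]
      rw [depthT t c (c + 1) _ _]
      rw [depthL t' ts' (c + 1) v st rest]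
      simp [lthornLL, List.append_assoc]
termination_by t ts c v st rest => sizeOf t + sizeOf ts
end

mutual
theorem depthT' : ∀ (T : PTree) (c : ℕ) (st : List ℕ),
    depthVecAux c st (lambdaT T) = (lthornList T).map (· + c)
  | .node [], c, st => by
      rw [lambdaT, lthornList]
      cases st with
      | nil => simp [lambdaL, depthVecAux]
      | cons v st => simp [lambdaL, depthVecAux]
  | .node (t :: ts), c, st => by
      rw [lambdaT]
      have hs : (0:ℤ) ≤ ((t :: ts).length : ℤ) - 1 := by simp
      rw [depthVecAux_up c _ _ hs]
      have htn : (((t :: ts).length : ℤ) - 1).toNat = ts.length := by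
        simp only [List.length_cons]; omega
      rw [htn, depthL' t ts c st, lthornList, List.map_cons]
      congr 1
      · omega
      · rw [lthornLL_shift]; congr 1; omega
termination_by T c st => sizeOf T
theorem depthL' : ∀ (t : PTree) (ts : List PTree) (c : ℕ) (st : List ℕ),
    depthVecAux c ((List.range ts.length).map (fun i => c + i + 1) ++ st) (lambdaL (t :: ts))
      = lthornLL c (t :: ts)
  | t, [], c, st => by
      rw [lambdaL]
      simp only [List.length_nil, List.range_zero, List.map_nil, List.nil_append, lambdaL,
        List.append_nil]
      rw [depthT' t c st, lthornLL, lthornLL]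
      simp
  | t, t' :: ts', c, st => by
      rw [lambdaL, List.length_cons, range_map_succ_push, List.cons_append]
      rw [depthT t c (c + 1) _ _]
      rw [depthL' t' ts' (c + 1) st]
      simp [lthornLL, List.append_assoc]
termination_by t ts c st => sizeOf t + sizeOf ts
end

theorem depth_lambdaT (T : PTree) : depth (lambdaT T) = (lthornList T).sum := by
  cases T with
  | node ts =>
    cases ts with
    | nil =>
        rw [lambdaT, lthornList]
        simp [lambdaL, depth, depthVec, depthVecAux]
    | cons t ts =>
        rw [depth, depthVec, lambdaT]
        have hs : (0:ℤ) ≤ ((t :: ts).length : ℤ) - 1 := by simp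
        rw [depthVecAux_up 0 _ _ hs]
        have htn : (((t :: ts).length : ℤ) - 1).toNat = ts.length := by
          simp only [List.length_cons]; omega
        rw [htn]
        have h2 := depthL' t ts 0 []
        rw [List.append_nil] at h2
        rw [List.append_nil, h2, lthornList]

theorem internCountL_cons (t : PTree) (ts : List PTree) :
    internCountL (t :: ts) = internCount t + internCountL ts := rfl

theorem internCountL_append (us vs : List PTree) :
    internCountL (us ++ vs) = internCountL us + internCountL vs := by
  induction us with
  | nil => simp [internCountL]
  | cons t us ih => rw [List.cons_append, internCountL_cons, internCountL_cons, ih]; omega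

theorem internCount_node (ts : List PTree) :
    internCount (.node ts) = if ts.isEmpty then 0 else 1 + internCountL ts := by
  cases ts <;> simp [internCount]

mutual
theorem ic_mir : ∀ T : PTree, internCount (mir T) = internCount T
  | .node [] => by rfl
  | .node (t :: ts) => by
      rw [mir_node, internCount_node, internCount_node]
      have hne : ((mirL (t :: ts)).reverse).isEmpty = false := by
        rw [mirL_reverse_cons]; simp
      rw [hne]
      simp only [List.isEmpty_cons, Bool.false_eq_true, if_false]
      rw [icl_mirrev (t :: ts)]
theorem icl_mirrev : ∀ ts : List PTree, internCountL ((mirL ts).reverse) = internCountL ts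
  | [] => by rfl
  | t :: ts => by
      rw [mirL_reverse_cons, internCountL_append, icl_mirrev ts, internCountL_cons,
        internCountL_cons, ic_mir t]
      simp [internCountL]
      omega
end

mutual
theorem len_lthornList : ∀ T : PTree, (lthornList T).length = internCount T
  | .node [] => by rw [lthornList, internCount]; rfl
  | .node (t :: ts) => by
      rw [lthornList, internCount, List.length_cons, len_lthornLL (t :: ts) 0]
      omega
theorem len_lthornLL : ∀ (ts : List PTree) (i : ℕ), (lthornLL i ts).length = internCountL ts
  | [], i => by simp [lthornLL, internCountL]
  | t :: ts, i => by
      rw [lthornLL, List.length_append, List.length_map, len_lthornList t,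
        len_lthornLL ts (i + 1), internCountL_cons]
end

mutual
theorem len_rthornList : ∀ T : PTree, (rthornList T).length = internCount T
  | .node [] => by rw [rthornList, internCount]; rfl
  | .node (t :: ts) => by
      rw [rthornList, internCount, List.length_cons, len_rthornLL (t :: ts)]
      omega
theorem len_rthornLL : ∀ ts : List PTree, (rthornLL ts).length = internCountL ts
  | [] => by simp [rthornLL, internCountL]
  | t :: ts => by
      rw [rthornLL, List.length_append, List.length_map, len_rthornList t,
        len_rthornLL ts, internCountL_cons]
end

theorem sum_map_add (l : List ℕ) (c : ℕ) : (l.map (· + c)).sum = l.sum + l.length * c := by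
  induction l with
  | nil => simp
  | cons x l ih => simp [ih]; ring

theorem lthornLL_sum_append (us : List PTree) : ∀ (vs : List PTree) (i : ℕ),
    (lthornLL i (us ++ vs)).sum = (lthornLL i us).sum + (lthornLL (i + us.length) vs).sum := by
  induction us with
  | nil => intro vs i; simp [lthornLL]
  | cons t us ih =>
      intro vs i
      rw [List.cons_append, lthornLL, lthornLL, List.sum_append, List.sum_append,
        ih vs (i + 1)]
      have e : i + 1 + us.length = i + (t :: us).length := by simp; omega
      rw [e]
      omega

mutual
theorem mirSumT : ∀ T : PTree, (lthornList (mir T)).sum = (rthornList T).sum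
  | .node [] => by rfl
  | .node (t :: ts) => by
      rw [mir_node, lthornList_node, rthornList_node]
      have hne : ((mirL (t :: ts)).reverse).isEmpty = false := by
        rw [mirL_reverse_cons]; simp
      rw [hne]
      simp only [List.isEmpty_cons, Bool.false_eq_true, if_false]
      have := mirSumL (t :: ts) 0
      simp only [List.sum_cons, Nat.zero_mul, Nat.add_zero, zero_add] at this ⊢
      rw [this]
theorem mirSumL : ∀ (ts : List PTree) (i : ℕ),
    (lthornLL i ((mirL ts).reverse)).sum = (rthornLL ts).sum + i * internCountL ts
  | [], i => by simp [mirL, lthornLL, rthornLL, internCountL]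
  | t :: ts, i => by
      rw [mirL_reverse_cons, lthornLL_sum_append, mirSumL ts i]
      have hlen : ((mirL ts).reverse).length = ts.length := by simp [mirL_eq_map]
      rw [hlen]
      rw [lthornLL, lthornLL, List.sum_append, sum_map_add, len_lthornList, ic_mir t,
        mirSumT t]
      rw [rthornLL, List.sum_append, sum_map_add, len_rthornList, internCountL_cons]
      simp only [lthornLL, List.sum_nil, List.length_cons]
      ring
end

theorem firstUp_lambdaT (t : PTree) (ts : List PTree) :
    firstUp? (lambdaT (.node (t :: ts))) = some ts.length := by
  rw [lambdaT, firstUp?]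
  have hd : (0:ℤ) ≤ ((t :: ts).length : ℤ) - 1 := by simp
  rw [upDegs_cons_nonneg hd]
  have : ((((t :: ts).length : ℤ)) - 1).toNat = ts.length := by
    simp only [List.length_cons]; omega
  rw [this]
  rfl

end Luka

open Luka in
/-- The map `λ ∘ mir ∘ τ` is an involution on `𝓛_{a,M}` exchanging `area` and `depth`:
it maps `𝓛_{a,M}` to itself, applying it twice is the identity, and for
`P' = λ(mir(τ(P)))` one has `area(P') = depth(P)` and `depth(P') = area(P)`. -/
theorem lambda_mir_tau_involution (a : ℕ) (M : Multiset ℕ) :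
    (∀ P, MemLa a M P → MemLa a M (lambdaT (mir (tau P)))) ∧
    (∀ P, MemLa a M P → lambdaT (mir (tau (lambdaT (mir (tau P))))) = P) ∧
    (∀ P, MemLa a M P →
      area (lambdaT (mir (tau P))) = depth P ∧
      depth (lambdaT (mir (tau P))) = area P) := by
  
  have key : ∀ P, MemLa a M P → ∃ t ts, tau P = .node (t :: ts) ∧ ts.length = a := by
    intro P hP
    obtain ⟨hL, hF, hprof⟩ := hP
    have hPT : lambdaT (tau P) = P := lambdaT_tau hL
    cases htau : tau P with
    | node ts =>
      cases ts with
      | nil =>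
          exfalso
          rw [htau] at hPT
          rw [← hPT, lambdaT] at hF
          simp [lambdaL, firstUp?, upDegs] at hF
      | cons t ts' =>
          refine ⟨t, ts', rfl, ?_⟩
          rw [htau] at hPT
          rw [← hPT, firstUp_lambdaT] at hF
          exact Option.some_inj.mp hF
  refine ⟨?_, ?_, ?_⟩
  · intro P hP
    obtain ⟨t, ts, htau, hlen⟩ := key P hP
    obtain ⟨hL, hF, hprof⟩ := hP
    have hPT : lambdaT (tau P) = P := lambdaT_tau hL
    refine ⟨isLukas_lambdaT _, ?_, ?_⟩
    · rw [htau, mir_node, mirL_reverse_cons]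
      cases hrev : (mirL ts).reverse ++ [mir t] with
      | nil => exact absurd hrev (by simp)
      | cons u us =>
          rw [firstUp_lambdaT]
          have : us.length = a := by
            have := congrArg List.length hrev
            simp [mirL_eq_map] at this
            omega
          rw [this]
    · have hperm := prof_mirT (tau P)
      rw [hPT] at hperm
      calc profileM (lambdaT (mir (tau P)))
          = profileM P := Quot.sound hperm
        _ = a ::ₘ M := hprof
  · intro P hP
    have hPT : lambdaT (tau P) = P := lambdaT_tau hP.1
    rw [tau_lambdaT (mir (tau P)), mir_mir, hPT]
  · intro P hP
    have hPT : lambdaT (tau P) = P := lambdaT_tau hP.1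
    constructor
    · calc area (lambdaT (mir (tau P)))
          = (rthornList (mir (tau P))).sum := area_lambdaT _
        _ = (lthornList (mir (mir (tau P)))).sum := (mirSumT (mir (tau P))).symm
        _ = (lthornList (tau P)).sum := by rw [mir_mir]
        _ = depth (lambdaT (tau P)) := (depth_lambdaT _).symm
        _ = depth P := by rw [hPT]
    · calc depth (lambdaT (mir (tau P)))
          = (lthornList (mir (tau P))).sum := depth_lambdaT _
        _ = (rthornList (tau P)).sum := mirSumT (tau P)
        _ = area (lambdaT (tau P)) := (area_lambdaT _).symm
        _ = area P := by rw [hPT]
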